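/- Let R ⊆ S be an extension of commutative rings. (1) If R ⊆ S is strongly local, then R ⊆ S is co-integrally closed. (2) If R ⊆ S is an integral extension, then R ⊆ S is strongly local if and only if R ⊆ S is co-integrally closed. -/
import Mathlib


/-- A ring extension `R ⊆ S` is *strongly local* if `U(R) = U(S)`. -/
def Subring.IsSLExt {S : Type*} [CommRing S] (R : Subring S) : Prop :=
  ∀ x y : S, x * y = 1 → x ∈ R ∧ y ∈ R

/-- A ring extension `R ⊆ S` is *co-integrally closed* if every `x ∈ S` which
is a root of a comonic polynomial over `R` (one whose constant coefficient is a
unit of `R`) lies in `R`. -/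
def Subring.IsCoIntegrallyClosed {S : Type*} [CommRing S] (R : Subring S) : Prop :=
  ∀ x : S, (∃ p : Polynomial ↥R, IsUnit (p.coeff 0) ∧ Polynomial.eval₂ R.subtype x p = 0) →
    x ∈ R

private lemma SL_imp_CIC {S : Type*} [CommRing S] (R : Subring S)
    (hSL : R.IsSLExt) : R.IsCoIntegrallyClosed := by
  rintro x ⟨p, hu, hev⟩
  obtain ⟨u, hu⟩ := hu.map R.subtype
  have hp : Polynomial.eval₂ R.subtype x (Polynomial.X * p.divX
      + Polynomial.C (p.coeff 0)) = 0 := by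
    rw [Polynomial.X_mul_divX_add, hev]
  simp only [Polynomial.eval₂_add, Polynomial.eval₂_mul, Polynomial.eval₂_X,
    Polynomial.eval₂_C] at hp
  have key : x * (-(Polynomial.eval₂ R.subtype x p.divX) * ↑u⁻¹) = 1 := by
    have : x * Polynomial.eval₂ R.subtype x p.divX = -(↑u : S) := by
      rw [hu]; linear_combination hp
    rw [← mul_assoc, mul_neg, this, neg_neg, Units.mul_inv]
  exact (hSL _ _ key).1

private lemma unit_mem {S : Type*} [CommRing S] (R : Subring S)
    (hC : R.IsCoIntegrallyClosed) {x y : S} (hy : IsIntegral R y)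
    (hxy : x * y = 1) : x ∈ R := by
  obtain ⟨p, hmonic, hev⟩ := hy
  letI : Invertible y := ⟨x, hxy, by rwa [mul_comm]⟩
  have hinv : (⅟ y : S) = x := rfl
  have halg : (algebraMap ↥R S) = R.subtype := rfl
  refine hC x ⟨p.reverse, ?_, ?_⟩
  · rw [Polynomial.coeff_zero_reverse, hmonic.leadingCoeff]
    exact isUnit_one
  · have := (Polynomial.eval₂_reverse_eq_zero_iff R.subtype y p).mpr (by rw [← halg]; exact hev)
    rwa [hinv] at this

theorem SL_and_co_integrally_closed {S : Type*} [CommRing S] (R : Subring S) :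
    -- (1) strongly local implies co-integrally closed
    (R.IsSLExt → R.IsCoIntegrallyClosed) ∧
    -- (2) for integral extensions the two notions are equivalent
    ((∀ x : S, IsIntegral R x) → (R.IsSLExt ↔ R.IsCoIntegrallyClosed)) := by
  refine ⟨SL_imp_CIC R, fun hint => ⟨SL_imp_CIC R, fun hC x y hxy => ?_⟩⟩
  exact ⟨unit_mem R hC (hint y) hxy, unit_mem R hC (hint x) (by rwa [mul_comm])⟩
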